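/- If G is a connected bipartite graph of order at least two, then the intersection of all stability systems of G does not have cardinality exactly one. -/

import Mathlib

open Finset

variable {V : Type*}

/-- A stable (independent) set of vertices of `G`. -/
def IsStableSet (G : SimpleGraph V) (S : Finset V) : Prop :=
  ∀ u ∈ S, ∀ v ∈ S, ¬ G.Adj u v

/-- The stability number `α(G)`: the maximum cardinality of a stable set. -/
noncomputable def stabNum (G : SimpleGraph V) [Fintype V] : ℕ :=
  sSup {n : ℕ | ∃ S : Finset V, IsStableSet G S ∧ S.card = n}

/-- A stability system of `G`: a stable set of maximum cardinality. -/
def IsStabSystem (G : SimpleGraph V) [Fintype V] (S : Finset V) : Prop :=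
  IsStableSet G S ∧ S.card = stabNum G

/-- `G` is α⁻-stable: deleting any edge leaves the stability number unchanged. -/
def AlphaMinusStable (G : SimpleGraph V) [Fintype V] : Prop :=
  ∀ u v : V, G.Adj u v → stabNum (G.deleteEdges {s(u, v)}) = stabNum G

/-- `G` is α⁺-stable: adding any edge of the complement leaves the stability
number unchanged. -/
def AlphaPlusStable (G : SimpleGraph V) [Fintype V] : Prop :=
  ∀ u v : V, u ≠ v → ¬ G.Adj u v →
    stabNum (G ⊔ SimpleGraph.fromEdgeSet {s(u, v)}) = stabNum G

/-- A matching of `G`, viewed as a set of pairwise non-incident edges. -/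
def IsMatchingSet (G : SimpleGraph V) (M : Finset (Sym2 V)) : Prop :=
  (↑M : Set (Sym2 V)) ⊆ G.edgeSet ∧
    ∀ e ∈ M, ∀ f ∈ M, e ≠ f → ∀ v : V, ¬ (v ∈ e ∧ v ∈ f)

/-- The matching number `μ(G)`. -/
noncomputable def matchNum (G : SimpleGraph V) [Fintype V] : ℕ :=
  sSup {n : ℕ | ∃ M : Finset (Sym2 V), IsMatchingSet G M ∧ M.card = n}

/-- A maximum matching of `G`. -/
def IsMaximumMatching (G : SimpleGraph V) [Fintype V] (M : Finset (Sym2 V)) : Prop :=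
  IsMatchingSet G M ∧ M.card = matchNum G

/-- A perfect matching of `G`: a matching covering every vertex. -/
def IsPerfectMatchingSet (G : SimpleGraph V) (M : Finset (Sym2 V)) : Prop :=
  IsMatchingSet G M ∧ ∀ v : V, ∃ e ∈ M, v ∈ e

/-- A pendant vertex: a vertex of degree one. -/
def IsPendant (G : SimpleGraph V) (v : V) : Prop :=
  (G.neighborSet v).ncard = 1

/-- A set `D` is 2-dominating: every vertex outside `D` has at least two
neighbors in `D`. -/
def Is2Dominating (G : SimpleGraph V) (D : Finset V) : Prop :=
  ∀ v : V, v ∉ D → 2 ≤ ({u : V | u ∈ D ∧ G.Adj v u}).ncard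

/-- A chordal graph: no induced cycle on four or more vertices. -/
def IsChordal (G : SimpleGraph V) : Prop :=
  ∀ n : ℕ, 4 ≤ n → IsEmpty (SimpleGraph.cycleGraph n ↪g G)

/-- A bipartite graph: the vertex set is partitioned into two stable sets. -/
def IsBipartiteGr (G : SimpleGraph V) [Fintype V] [DecidableEq V] : Prop :=
  ∃ C : Finset V, IsStableSet G C ∧ IsStableSet G Cᶜ

/-- A strong unique independence graph: a graph with a unique stability system
whose complement is also stable. -/
def IsStrongUniqueIndep (G : SimpleGraph V) [Fintype V] [DecidableEq V] : Prop :=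
  ∃ S : Finset V, IsStabSystem G S ∧ (∀ S' : Finset V, IsStabSystem G S' → S' = S) ∧
    IsStableSet G Sᶜ

/-- A bistable bipartite graph: its two color classes are its only two
stability systems. -/
def IsBistable (G : SimpleGraph V) [Fintype V] [DecidableEq V] : Prop :=
  ∃ A : Finset V, IsStableSet G A ∧ IsStableSet G Aᶜ ∧
    IsStabSystem G A ∧ IsStabSystem G Aᶜ ∧ A ≠ Aᶜ ∧
    ∀ S : Finset V, IsStabSystem G S → S = A ∨ S = Aᶜ

/-- A vertex cover of `G`. -/
def IsVertexCover (G : SimpleGraph V) (C : Finset V) : Prop :=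
  ∀ u v : V, G.Adj u v → u ∈ C ∨ v ∈ C

/-- A minimum vertex cover of `G`. -/
def IsMinVertexCover (G : SimpleGraph V) [Fintype V] (C : Finset V) : Prop :=
  IsVertexCover G C ∧ ∀ C' : Finset V, IsVertexCover G C' → C.card ≤ C'.card

/-! ### Auxiliary lemmas for statement 13 -/

section Aux
variable [Fintype V] [DecidableEq V] (G : SimpleGraph V)

lemma bddAboveAux : BddAbove {n : ℕ | ∃ S : Finset V, IsStableSet G S ∧ S.card = n} := by
  refine ⟨Fintype.card V, fun n hn => ?_⟩
  obtain ⟨S, _, rfl⟩ := hn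
  simpa using S.card_le_univ

lemma card_le_stabNum {T : Finset V} (hT : IsStableSet G T) : T.card ≤ stabNum G :=
  le_csSup (bddAboveAux G) ⟨T, hT, rfl⟩

lemma exists_isStabSystem : ∃ S : Finset V, IsStabSystem G S := by
  have hne : {n : ℕ | ∃ S : Finset V, IsStableSet G S ∧ S.card = n}.Nonempty :=
    ⟨0, ∅, by intro u hu; simp at hu, by simp⟩
  obtain ⟨S, hS, hc⟩ := Nat.sSup_mem hne (bddAboveAux G)
  exact ⟨S, hS, hc⟩

open Classical in
/-- The neighbours (in `Aᶜ`) of a subset `T` of `A`. -/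
noncomputable def NBaux (A T : Finset V) : Finset V :=
  Aᶜ.filter (fun b => ∃ a ∈ T, G.Adj a b)

lemma mem_NBaux {A T : Finset V} {b : V} :
    b ∈ NBaux G A T ↔ b ∈ Aᶜ ∧ ∃ a ∈ T, G.Adj a b := by
  classical simp [NBaux]

/-- The surplus function `f(T) = |T| - |N(T) ∩ Aᶜ|`. -/
noncomputable def fAux (A T : Finset V) : ℤ :=
  (T.card : ℤ) - ((NBaux G A T).card : ℤ)

lemma fAux_le {A T : Finset V} (hA : IsStableSet G A) (hB : IsStableSet G Aᶜ)
    (hTA : T ⊆ A) : fAux G A T ≤ (stabNum G : ℤ) - (Aᶜ.card : ℤ) := by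
  set S := T ∪ (Aᶜ \ NBaux G A T) with hS
  have hstable : IsStableSet G S := by
    intro u hu w hw hadj
    rw [hS, mem_union] at hu hw
    rcases hu with hu | hu
    · rcases hw with hw | hw
      · exact hA u (hTA hu) w (hTA hw) hadj
      · rw [mem_sdiff] at hw
        exact hw.2 (mem_NBaux G |>.2 ⟨hw.1, u, hu, hadj⟩)
    · rcases hw with hw | hw
      · rw [mem_sdiff] at hu
        exact hu.2 (mem_NBaux G |>.2 ⟨hu.1, w, hw, hadj.symm⟩)
      · exact hB u (mem_sdiff.1 hu).1 w (mem_sdiff.1 hw).1 hadj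
  have hdisj : Disjoint T (Aᶜ \ NBaux G A T) := by
    refine Finset.disjoint_left.2 fun x hx hx' => ?_
    have := (mem_sdiff.1 hx').1
    simp only [mem_compl] at this
    exact this (hTA hx)
  have hsub : NBaux G A T ⊆ Aᶜ := fun b hb => (mem_NBaux G |>.1 hb).1
  have hcard : S.card = T.card + (Aᶜ.card - (NBaux G A T).card) := by
    rw [hS, card_union_of_disjoint hdisj, card_sdiff_of_subset hsub]
  have hle : S.card ≤ stabNum G := card_le_stabNum G hstable
  have hle' : (NBaux G A T).card ≤ Aᶜ.card := card_le_card hsub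
  unfold fAux
  omega

lemma fAux_stabSystem {A S : Finset V} (hA : IsStableSet G A) (hB : IsStableSet G Aᶜ)
    (hS : IsStabSystem G S) :
    fAux G A (S ∩ A) = (stabNum G : ℤ) - (Aᶜ.card : ℤ) := by
  refine le_antisymm (fAux_le G hA hB inter_subset_right) ?_
  have hsub : S ∩ Aᶜ ⊆ Aᶜ \ NBaux G A (S ∩ A) := by
    intro b hb
    rw [mem_inter] at hb
    rw [mem_sdiff]
    refine ⟨hb.2, fun hbn => ?_⟩
    obtain ⟨-, a, ha, hadj⟩ := mem_NBaux G |>.1 hbn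
    exact hS.1 a (mem_inter.1 ha).1 b hb.1 hadj
  have hNsub : NBaux G A (S ∩ A) ⊆ Aᶜ := fun b hb => (mem_NBaux G |>.1 hb).1
  have hcard1 : (S ∩ Aᶜ).card ≤ Aᶜ.card - (NBaux G A (S ∩ A)).card := by
    calc (S ∩ Aᶜ).card ≤ (Aᶜ \ NBaux G A (S ∩ A)).card := card_le_card hsub
    _ = _ := card_sdiff_of_subset hNsub
  have hsplit : (S ∩ A).card + (S ∩ Aᶜ).card = S.card := by
    rw [← card_union_of_disjoint (disjoint_left.2 fun x hx hx' =>
      (mem_compl.1 (mem_inter.1 hx').2) (mem_inter.1 hx).2)]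
    congr 1
    rw [← inter_union_distrib_left, union_compl, inter_univ]
  have hNle : (NBaux G A (S ∩ A)).card ≤ Aᶜ.card := card_le_card hNsub
  have hcards := hS.2
  unfold fAux
  omega

lemma fAux_inter {A T T' : Finset V} (hA : IsStableSet G A) (hB : IsStableSet G Aᶜ)
    (hTA : T ⊆ A) (hT'A : T' ⊆ A)
    (hT : fAux G A T = (stabNum G : ℤ) - (Aᶜ.card : ℤ))
    (hT' : fAux G A T' = (stabNum G : ℤ) - (Aᶜ.card : ℤ)) :
    fAux G A (T ∩ T') = (stabNum G : ℤ) - (Aᶜ.card : ℤ) := by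
  have hunion : NBaux G A (T ∪ T') = NBaux G A T ∪ NBaux G A T' := by
    ext b
    constructor
    · intro hb
      obtain ⟨hbc, a, ha, hadj⟩ := (mem_NBaux G).1 hb
      rcases mem_union.1 ha with h | h
      · exact mem_union.2 (Or.inl ((mem_NBaux G).2 ⟨hbc, a, h, hadj⟩))
      · exact mem_union.2 (Or.inr ((mem_NBaux G).2 ⟨hbc, a, h, hadj⟩))
    · intro hb
      rcases mem_union.1 hb with h | h
      · obtain ⟨hbc, a, ha, hadj⟩ := (mem_NBaux G).1 h
        exact (mem_NBaux G).2 ⟨hbc, a, mem_union.2 (Or.inl ha), hadj⟩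
      · obtain ⟨hbc, a, ha, hadj⟩ := (mem_NBaux G).1 h
        exact (mem_NBaux G).2 ⟨hbc, a, mem_union.2 (Or.inr ha), hadj⟩
  have hintersub : NBaux G A (T ∩ T') ⊆ NBaux G A T ∩ NBaux G A T' := by
    intro b hb
    obtain ⟨hbc, a, ha, hadj⟩ := mem_NBaux G |>.1 hb
    rw [mem_inter] at ha ⊢
    exact ⟨(mem_NBaux G).2 ⟨hbc, a, ha.1, hadj⟩, (mem_NBaux G).2 ⟨hbc, a, ha.2, hadj⟩⟩
  have h1 : (T ∪ T').card + (T ∩ T').card = T.card + T'.card :=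
    card_union_add_card_inter T T'
  have h2 : (NBaux G A T ∪ NBaux G A T').card + (NBaux G A T ∩ NBaux G A T').card
      = (NBaux G A T).card + (NBaux G A T').card :=
    card_union_add_card_inter _ _
  have h3 : (NBaux G A (T ∩ T')).card ≤ (NBaux G A T ∩ NBaux G A T').card :=
    card_le_card hintersub
  have h4 := fAux_le G hA hB (union_subset hTA hT'A)
  have h5 := fAux_le G hA hB (fun x hx => hTA (mem_inter.1 hx).1 : T ∩ T' ⊆ A)
  unfold fAux at hT hT' h4 h5 ⊢
  rw [hunion] at h4
  omega

lemma inf_maximizer {A : Finset V} (hA : IsStableSet G A) (hB : IsStableSet G Aᶜ)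
    (𝒯 : Finset (Finset V)) (hne : 𝒯.Nonempty)
    (h : ∀ T ∈ 𝒯, T ⊆ A ∧ fAux G A T = (stabNum G : ℤ) - (Aᶜ.card : ℤ)) :
    𝒯.inf id ⊆ A ∧ fAux G A (𝒯.inf id) = (stabNum G : ℤ) - (Aᶜ.card : ℤ) := by
  induction hne using Finset.Nonempty.cons_induction with
  | singleton a => simpa using h a (by simp)
  | cons a s ha hs ih =>
    rw [inf_cons]
    have hmem : ∀ T ∈ s, T ⊆ A ∧ fAux G A T = (stabNum G : ℤ) - (Aᶜ.card : ℤ) :=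
      fun T hT => h T (by simp [hT])
    have ha' := h a (by simp)
    obtain ⟨ih1, ih2⟩ := ih hmem
    simp only [id_eq, inf_eq_inter]
    exact ⟨fun x hx => ha'.1 (mem_inter.1 hx).1,
      fAux_inter G hA hB ha'.1 ih1 ha'.2 ih2⟩

lemma mem_inf_id {𝒯 : Finset (Finset V)} {x : V} :
    x ∈ 𝒯.inf id ↔ ∀ T ∈ 𝒯, x ∈ T := by
  classical
  induction 𝒯 using Finset.induction with
  | empty => simp [Finset.inf_empty, Finset.top_eq_univ]
  | insert a s h ih =>
    rw [Finset.inf_insert]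
    simp only [id, inf_eq_inter, mem_inter, ih, mem_insert]
    constructor
    · rintro ⟨h1, h2⟩ T (rfl | hT)
      · exact h1
      · exact h2 T hT
    · intro hT
      exact ⟨hT _ (Or.inl rfl), fun T h' => hT T (Or.inr h')⟩

lemma core_aux {A : Finset V} (hA : IsStableSet G A) (hB : IsStableSet G Aᶜ)
    {v : V} (hvA : v ∈ A) (hvnb : ∃ u, G.Adj v u)
    (hvall : ∀ S : Finset V, IsStabSystem G S → v ∈ S)
    (hcore : ∀ x : V, (∀ S : Finset V, IsStabSystem G S → x ∈ S) → x = v) : False := by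
  classical
  set 𝒯 : Finset (Finset V) :=
    ((univ : Finset (Finset V)).filter (fun S => IsStabSystem G S)).image (· ∩ A) with h𝒯
  obtain ⟨S₀, hS₀⟩ := exists_isStabSystem G
  have hne : 𝒯.Nonempty := ⟨S₀ ∩ A, mem_image.2 ⟨S₀, by simp [hS₀], rfl⟩⟩
  have hprop : ∀ T ∈ 𝒯, T ⊆ A ∧ fAux G A T = (stabNum G : ℤ) - (Aᶜ.card : ℤ) := by
    intro T hT
    obtain ⟨S, hS, rfl⟩ := mem_image.1 hT
    rw [mem_filter] at hS
    exact ⟨inter_subset_right, fAux_stabSystem G hA hB hS.2⟩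
  obtain ⟨hT₀A, hT₀f⟩ := inf_maximizer G hA hB 𝒯 hne hprop
  have hT₀ : 𝒯.inf id = {v} := by
    ext x
    rw [mem_inf_id, mem_singleton]
    constructor
    · intro hx
      refine hcore x fun S hS => ?_
      have hmem : (S ∩ A) ∈ 𝒯 := mem_image.2 ⟨S, by simp [hS], rfl⟩
      exact (mem_inter.1 (hx _ hmem)).1
    · rintro rfl T hT
      obtain ⟨S, hS, rfl⟩ := mem_image.1 hT
      rw [mem_filter] at hS
      exact mem_inter.2 ⟨hvall S hS.2, hvA⟩
  rw [hT₀] at hT₀f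
  -- the singleton {v} is a maximizer, so d ≤ 0
  obtain ⟨u, hu⟩ := hvnb
  have huB : u ∈ Aᶜ := by
    rw [mem_compl]
    intro huA
    exact hA v hvA u huA hu
  have huNB : u ∈ NBaux G A {v} := (mem_NBaux G).2 ⟨huB, v, mem_singleton_self v, hu⟩
  have hNB1 : 1 ≤ (NBaux G A {v}).card := card_pos.2 ⟨u, huNB⟩
  have hfv : fAux G A ({v} : Finset V) = 1 - ((NBaux G A {v}).card : ℤ) := by
    unfold fAux; rw [card_singleton]; norm_num
  -- the empty set gives d ≥ 0
  have hNBempty : NBaux G A (∅ : Finset V) = ∅ := by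
    ext b; simp [mem_NBaux]
  have hfempty : fAux G A (∅ : Finset V) = 0 := by
    unfold fAux; rw [hNBempty]; simp
  have h0le := fAux_le G hA hB (empty_subset A)
  rw [hfempty] at h0le
  rw [hfv] at hT₀f
  -- hence d = 0 and Aᶜ is a maximum stable set
  have hcard : Aᶜ.card = stabNum G := by
    have hle := card_le_stabNum G hB
    omega
  have : v ∈ Aᶜ := hvall Aᶜ ⟨hB, hcard⟩
  exact (mem_compl.1 this) hvA

lemma exists_adj_of_connected (hc : G.Connected) (h2 : 2 ≤ Fintype.card V) (v : V) :
    ∃ u, G.Adj v u := by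
  obtain ⟨w, hw⟩ := Fintype.exists_ne_of_one_lt_card (by omega) v
  obtain ⟨p⟩ := hc.preconnected v w
  cases p with
  | nil => exact absurd rfl hw
  | cons h _ => exact ⟨_, h⟩

end Aux

/-- If `G` is a connected bipartite graph of order at least two,
then the intersection of all stability systems of `G` does not have
cardinality exactly one. -/
theorem stmt13 {V : Type*} [Fintype V] [DecidableEq V] (G : SimpleGraph V)
    (hc : G.Connected) (hbip : IsBipartiteGr G) (h2 : 2 ≤ Fintype.card V) :
    (⋂ S ∈ {S : Finset V | IsStabSystem G S}, (↑S : Set V)).ncard ≠ 1 := by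
  intro h1
  obtain ⟨v, hv⟩ := Set.ncard_eq_one.1 h1
  have hmem : ∀ x : V, x ∈ (⋂ S ∈ {S : Finset V | IsStabSystem G S}, (↑S : Set V)) ↔
      ∀ S : Finset V, IsStabSystem G S → x ∈ S := by
    intro x
    simp [Set.mem_iInter]
  have hvall : ∀ S : Finset V, IsStabSystem G S → v ∈ S := by
    rw [← hmem v, hv]; exact Set.mem_singleton v
  have hcore : ∀ x : V, (∀ S : Finset V, IsStabSystem G S → x ∈ S) → x = v := by
    intro x hx
    have : x ∈ ({v} : Set V) := hv ▸ (hmem x).2 hx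
    exact this
  obtain ⟨A, hA, hB⟩ := hbip
  have hvnb : ∃ u, G.Adj v u := exists_adj_of_connected G hc h2 v
  by_cases hvA : v ∈ A
  · exact core_aux G hA hB hvA hvnb hvall hcore
  · have hA' : IsStableSet G (Aᶜ)ᶜ := by rw [compl_compl]; exact hA
    exact core_aux G hB hA' (mem_compl.2 hvA) hvnb hvall hcore
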